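/- Let p be a prime, m ≥ 1 and ℓ ≥ m/2 integers, and f_0, ..., f_{m-1} : ℝ/ℤ → ℝ_{≥0}. Then ∑_{H monic, deg H = ℓ} ∑_{G mod H, gcd(G,H)=1} ∏_{j=0}^{m-1} f_j(ψ_p(T^j G/H)) ≤ p^{2ℓ - m} ∏_{j=0}^{m-1} (∑_{ξ ∈ ℤ/pℤ} f_j(ξ/p)), where ψ_p(X) = res(X)/p ∈ ℝ/ℤ and G/H is computed in 𝔽_p((1/T)). -/

import Mathlib

open Polynomial

/-- The value `ψ_p(T^j G/H) ∈ ℝ/ℤ`, where `ψ_p(X) = res(X)/p` and `res` is the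
coefficient of `T^{-1}` of the Laurent expansion at infinity: writing
`T^j G = Q·H + R` with `deg R < deg H` (`H` monic), `res(T^j G/H)` equals the
coefficient of `T^{deg H - 1}` in `R = (T^j G) mod H`. -/
noncomputable def psiFrac (p : ℕ) (j : ℕ) (G H : Polynomial (ZMod p)) :
    AddCircle (1 : ℝ) :=
  ((((Polynomial.X ^ j * G) %ₘ H).coeff (H.natDegree - 1)).val / (p : ℝ) : ℝ)

variable {K : Type*} [Field K]

/-- Division step: quotient/remainder of `X^(k+1)*G` by `H` from those of `X^k*G`. -/
lemma div_mod_step {H G : K[X]} (hH : H.Monic) (h1 : 1 ≤ H.natDegree)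
    (k : ℕ) :
    (X ^ (k+1) * G) /ₘ H
        = X * ((X ^ k * G) /ₘ H) + C (((X ^ k * G) %ₘ H).coeff (H.natDegree - 1)) ∧
      (X ^ (k+1) * G) %ₘ H
        = X * ((X ^ k * G) %ₘ H) - C (((X ^ k * G) %ₘ H).coeff (H.natDegree - 1)) * H := by
  set R := (X ^ k * G) %ₘ H with hR
  set Q := (X ^ k * G) /ₘ H with hQ
  set c := R.coeff (H.natDegree - 1) with hc
  have hdiv : R + H * Q = X ^ k * G := modByMonic_add_div _ H
  have hdegR : R.degree < H.degree := degree_modByMonic_lt _ hH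
  have hdegH : H.degree = (H.natDegree : WithBot ℕ) := degree_eq_natDegree hH.ne_zero
  have hdeg : (X * R - C c * H).degree < H.degree := by
    rw [hdegH]
    rw [degree_lt_iff_coeff_zero]
    intro i hi
    rw [coeff_sub, coeff_C_mul]
    have hi1 : i = (i - 1) + 1 := by omega
    rw [hi1, coeff_X_mul]
    rcases eq_or_lt_of_le hi with h | h
    · have : i - 1 + 1 = H.natDegree := by omega
      rw [this] at *
      have : i - 1 = H.natDegree - 1 := by omega
      rw [this, hH.coeff_natDegree, mul_one, ← hc, sub_self]
    · have h2 : R.coeff (i - 1) = 0 := by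
        apply coeff_eq_zero_of_degree_lt
        have h4 : (H.natDegree : WithBot ℕ) ≤ ((i - 1 : ℕ) : WithBot ℕ) := by
          exact_mod_cast (show H.natDegree ≤ i - 1 by omega)
        exact lt_of_lt_of_le (hdegR.trans_le hdegH.le) h4
      have h3 : H.coeff (i - 1 + 1) = 0 := by
        apply coeff_eq_zero_of_natDegree_lt; omega
      rw [h2, h3, mul_zero, sub_self]
  exact div_modByMonic_unique (X * Q + C c) (X * R - C c * H) hH
    ⟨by linear_combination X * hdiv, hdeg⟩

/-- Formula for the quotient of `X^k*G` by `H` in terms of top remainder coefficients. -/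
lemma quot_formula {H G : K[X]} (hH : H.Monic) (h1 : 1 ≤ H.natDegree)
    (hG : G.degree < H.degree) (k : ℕ) :
    (X ^ k * G) /ₘ H
      = ∑ j ∈ Finset.range k,
          C (((X ^ j * G) %ₘ H).coeff (H.natDegree - 1)) * X ^ (k - 1 - j) := by
  induction k with
  | zero =>
      simp only [pow_zero, one_mul, Finset.range_zero, Finset.sum_empty]
      exact (divByMonic_eq_zero_iff hH).2 hG
  | succ k ih =>
      rw [(div_mod_step hH h1 k).1, ih, Finset.mul_sum, Finset.sum_range_succ]
      congr 1
      · apply Finset.sum_congr rfl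
        intro j hj
        rw [Finset.mem_range] at hj
        rw [show k + 1 - 1 - j = (k - 1 - j) + 1 from by omega, pow_succ]
        ring
      · rw [show k + 1 - 1 - k = 0 from by omega, pow_zero, mul_one]

/-- If two reduced-fraction data share the first `m` residue coefficients, then the
cross-difference `G*H0 - G0*H` has degree `< 2ℓ - m`. -/
lemma key_deg {G H G0 H0 : K[X]} {m ℓ : ℕ} (hm : 1 ≤ m) (hmℓ : m ≤ 2 * ℓ)
    (hH : H.Monic) (hHd : H.natDegree = ℓ) (hG : G.degree < H.degree)
    (hH0 : H0.Monic) (hH0d : H0.natDegree = ℓ) (hG0 : G0.degree < H0.degree)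
    (heq : ∀ j < m, ((X ^ j * G) %ₘ H).coeff (ℓ - 1)
        = ((X ^ j * G0) %ₘ H0).coeff (ℓ - 1)) :
    (G * H0 - G0 * H).degree < ((2 * ℓ - m : ℕ) : WithBot ℕ) := by
  have hl1 : 1 ≤ ℓ := by omega
  have hQ : (X ^ m * G) /ₘ H = (X ^ m * G0) /ₘ H0 := by
    rw [quot_formula hH (by omega) hG m, quot_formula hH0 (by omega) hG0 m]
    apply Finset.sum_congr rfl
    intro j hj
    rw [Finset.mem_range] at hj
    rw [hHd, hH0d, heq j hj]
  have h1 := modByMonic_add_div (X ^ m * G) H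
  have h2 := modByMonic_add_div (X ^ m * G0) H0
  have hx : X ^ m * (G * H0 - G0 * H)
      = ((X ^ m * G) %ₘ H) * H0 - ((X ^ m * G0) %ₘ H0) * H := by
    linear_combination -H0 * h1 + H * h2 + H * H0 * hQ
  have hdnat : ∀ (A B : K[X]), A.degree < B.degree → B.Monic → B.natDegree = ℓ →
      A.natDegree ≤ ℓ - 1 := by
    intro A B hAB hB hBd
    rcases eq_or_ne A 0 with rfl | hA0
    · simp
    · have := natDegree_lt_natDegree hA0 hAB
      omega
  have hR : ((X ^ m * G) %ₘ H).natDegree ≤ ℓ - 1 :=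
    hdnat _ H (degree_modByMonic_lt _ hH) hH hHd
  have hR0 : ((X ^ m * G0) %ₘ H0).natDegree ≤ ℓ - 1 :=
    hdnat _ H0 (degree_modByMonic_lt _ hH0) hH0 hH0d
  rw [degree_lt_iff_coeff_zero]
  intro i hi
  have : (G * H0 - G0 * H).coeff i = (X ^ m * (G * H0 - G0 * H)).coeff (i + m) := by
    rw [coeff_X_pow_mul]
  rw [this, hx, coeff_sub]
  have e1 : (((X ^ m * G) %ₘ H) * H0).coeff (i + m) = 0 := by
    apply coeff_eq_zero_of_natDegree_lt
    have := natDegree_mul_le (p := (X ^ m * G) %ₘ H) (q := H0)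
    omega
  have e2 : (((X ^ m * G0) %ₘ H0) * H).coeff (i + m) = 0 := by
    apply coeff_eq_zero_of_natDegree_lt
    have := natDegree_mul_le (p := (X ^ m * G0) %ₘ H0) (q := H)
    omega
  rw [e1, e2, sub_self]

lemma finite_natDegree_lt (K : Type*) [Semiring K] [Finite K] (n : ℕ) :
    {f : K[X] | f.natDegree < n}.Finite := by
  apply Set.Finite.subset (Set.finite_range
    (fun v : Fin n → K => ∑ i : Fin n, monomial (i : ℕ) (v i)))
  intro f hf
  refine ⟨fun i => f.coeff i, ?_⟩
  show ∑ i : Fin n, monomial (i : ℕ) (f.coeff (i : ℕ)) = f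
  rw [Fin.sum_univ_eq_sum_range (fun i => monomial i (f.coeff i)) n]
  exact (f.as_sum_range' n hf).symm


/-- Large sieve type inequality in `𝔽_p[T]`: for `ℓ ≥ m/2` and
`f_0, …, f_{m-1} : ℝ/ℤ → ℝ_{≥0}`,
`∑_{H monic, deg H = ℓ} ∑_{G mod H, (G,H)=1} ∏_{j<m} f_j(ψ_p(T^j G/H))
  ≤ p^{2ℓ-m} ∏_{j<m} ∑_{ξ ∈ ℤ/pℤ} f_j(ξ/p)`. -/
theorem stmt_9 (p : ℕ) [hp : Fact p.Prime] (m ℓ : ℕ) (hm : 1 ≤ m) (hℓ : m ≤ 2 * ℓ)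
    (f : ℕ → AddCircle (1 : ℝ) → ℝ) (hf : ∀ j x, 0 ≤ f j x) :
    (∑ᶠ (H : Polynomial (ZMod p)) (_ : H.Monic ∧ H.natDegree = ℓ),
      ∑ᶠ (G : Polynomial (ZMod p)) (_ : G.degree < H.degree ∧ IsCoprime G H),
        ∏ j ∈ Finset.range m, f j (psiFrac p j G H))
      ≤ (p : ℝ) ^ (2 * ℓ - m) *
          ∏ j ∈ Finset.range m, ∑ ξ : ZMod p, f j (((ξ.val : ℝ) / (p : ℝ) : ℝ)) := by
  classical
  have hl1 : 1 ≤ ℓ := by omega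
  have hfinH : {H : Polynomial (ZMod p) | H.Monic ∧ H.natDegree = ℓ}.Finite := by
    apply (finite_natDegree_lt (ZMod p) (ℓ + 1)).subset
    rintro H ⟨-, h⟩
    simp only [Set.mem_setOf_eq, h]
    omega
  have hfinG : ∀ H : Polynomial (ZMod p),
      {G : Polynomial (ZMod p) | G.degree < H.degree ∧ IsCoprime G H}.Finite := by
    intro H
    apply (finite_natDegree_lt (ZMod p) (H.natDegree + 1)).subset
    rintro G ⟨h, -⟩
    exact lt_of_le_of_lt (natDegree_le_natDegree h.le) (Nat.lt_succ_self _)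
  set 𝓗 : Finset (Polynomial (ZMod p)) := hfinH.toFinset with h𝓗
  set 𝓖 : Polynomial (ZMod p) → Finset (Polynomial (ZMod p)) :=
    fun H => (hfinG H).toFinset with h𝓖
  have hLHS : (∑ᶠ (H : Polynomial (ZMod p)) (_ : H.Monic ∧ H.natDegree = ℓ),
      ∑ᶠ (G : Polynomial (ZMod p)) (_ : G.degree < H.degree ∧ IsCoprime G H),
        ∏ j ∈ Finset.range m, f j (psiFrac p j G H))
      = ∑ H ∈ 𝓗, ∑ G ∈ 𝓖 H, ∏ j ∈ Finset.range m, f j (psiFrac p j G H) := by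
    have hmemH : ∀ H : Polynomial (ZMod p), (H.Monic ∧ H.natDegree = ℓ) ↔ H ∈ 𝓗 := by
      intro H
      rw [h𝓗, Set.Finite.mem_toFinset, Set.mem_setOf_eq]
    have hmemG : ∀ H G : Polynomial (ZMod p),
        (G.degree < H.degree ∧ IsCoprime G H) ↔ G ∈ 𝓖 H := by
      intro H G
      rw [h𝓖, Set.Finite.mem_toFinset, Set.mem_setOf_eq]
    rw [finsum_cond_eq_sum_of_cond_iff _ (fun {H} _ => hmemH H)]
    exact Finset.sum_congr rfl fun H _ =>
      finsum_cond_eq_sum_of_cond_iff _ (fun {G} _ => hmemG H G)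
  rw [hLHS, Finset.sum_sigma 𝓗 𝓖
    (fun x => ∏ j ∈ Finset.range m, f j (psiFrac p j x.2 x.1)) |>.symm]
  set S : Finset ((_ : Polynomial (ZMod p)) × Polynomial (ZMod p)) := 𝓗.sigma 𝓖 with hS
  set g : ((_ : Polynomial (ZMod p)) × Polynomial (ZMod p)) → (Fin m → ZMod p) :=
    fun x j => ((X ^ (j : ℕ) * x.2) %ₘ x.1).coeff (ℓ - 1) with hg
  rw [← Finset.sum_fiberwise_of_maps_to (t := (Finset.univ : Finset (Fin m → ZMod p)))
    (fun x _ => Finset.mem_univ (g x))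
    (fun x => ∏ j ∈ Finset.range m, f j (psiFrac p j x.2 x.1))]
  -- properties of members of S
  have hprop : ∀ x ∈ S, x.1.Monic ∧ x.1.natDegree = ℓ ∧
      x.2.degree < x.1.degree ∧ IsCoprime x.2 x.1 := by
    intro x hx
    rw [hS, Finset.mem_sigma] at hx
    obtain ⟨h1, h2⟩ := hx
    rw [h𝓗, Set.Finite.mem_toFinset, Set.mem_setOf_eq] at h1
    rw [h𝓖, Set.Finite.mem_toFinset, Set.mem_setOf_eq] at h2
    exact ⟨h1.1, h1.2, h2.1, h2.2⟩
  -- the counting bound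
  have hcount : ∀ v : Fin m → ZMod p,
      (S.filter (fun x => g x = v)).card ≤ p ^ (2 * ℓ - m) := by
    intro v
    rcases (S.filter (fun x => g x = v)).eq_empty_or_nonempty with he | ⟨x0, hx0⟩
    · rw [he, Finset.card_empty]; exact Nat.zero_le _
    · obtain ⟨hx0S, hgx0⟩ := Finset.mem_filter.1 hx0
      obtain ⟨h0m, h0d, h0G, h0C⟩ := hprop x0 hx0S
      -- degree bound for members of the fiber
      have hdeg : ∀ x ∈ S.filter (fun x => g x = v),
          (x.2 * x0.1 - x0.2 * x.1).degree < ((2 * ℓ - m : ℕ) : WithBot ℕ) := by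
        intro x hx
        obtain ⟨hxS, hgx⟩ := Finset.mem_filter.1 hx
        obtain ⟨hxm, hxd, hxG, hxC⟩ := hprop x hxS
        apply key_deg hm hℓ hxm hxd hxG h0m h0d h0G
        intro j hj
        have := congrFun (hgx.trans hgx0.symm) ⟨j, hj⟩
        simpa [hg] using this
      have hcard : (S.filter (fun x => g x = v)).card
          ≤ (Finset.univ : Finset (Fin (2 * ℓ - m) → ZMod p)).card := by
        apply Finset.card_le_card_of_injOn
          (fun x => fun i : Fin (2 * ℓ - m) => (x.2 * x0.1 - x0.2 * x.1).coeff (i : ℕ))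
          (fun _ _ => Finset.mem_univ _)
        intro x hx y hy hxy
        have hPoly : x.2 * x0.1 - x0.2 * x.1 = y.2 * x0.1 - x0.2 * y.1 := by
          ext i
          by_cases hi : i < 2 * ℓ - m
          · have := congrFun hxy (⟨i, hi⟩ : Fin (2 * ℓ - m))
            simpa using this
          · rw [(degree_lt_iff_coeff_zero _ _).1 (hdeg x hx) i (by omega),
                (degree_lt_iff_coeff_zero _ _).1 (hdeg y hy) i (by omega)]
        obtain ⟨hxm, hxd, hxG, hxC⟩ := hprop x (Finset.mem_filter.1 hx).1
        obtain ⟨hym, hyd, hyG, hyC⟩ := hprop y (Finset.mem_filter.1 hy).1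
        have hkey : (x.2 - y.2) * x0.1 = x0.2 * (x.1 - y.1) := by
          linear_combination hPoly
        have hdvd : x0.1 ∣ x0.2 * (x.1 - y.1) := ⟨x.2 - y.2, by linear_combination -hPoly⟩
        have hdvd2 : x0.1 ∣ x.1 - y.1 := h0C.symm.dvd_of_dvd_mul_left hdvd
        have hH1 : x.1 = y.1 := by
          rcases eq_or_ne x.1 y.1 with h | h
          · exact h
          · exfalso
            have hlt : (x.1 - y.1).degree < x.1.degree :=
              degree_sub_lt
                (by rw [degree_eq_natDegree hxm.ne_zero,
                        degree_eq_natDegree hym.ne_zero, hxd, hyd])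
                hxm.ne_zero (by rw [hxm.leadingCoeff, hym.leadingCoeff])
            have hlt2 : (x.1 - y.1).degree < x0.1.degree := by
              rwa [degree_eq_natDegree hxm.ne_zero, hxd, ← h0d,
                ← degree_eq_natDegree h0m.ne_zero] at hlt
            exact h (sub_eq_zero.1 (eq_zero_of_dvd_of_degree_lt hdvd2 hlt2))
        have hG2 : x.2 = y.2 := by
          have hz : (x.2 - y.2) * x0.1 = 0 := by
            rw [hkey, hH1, sub_self, mul_zero]
          rcases mul_eq_zero.1 hz with h | h
          · exact sub_eq_zero.1 h
          · exact absurd h h0m.ne_zero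
        exact Sigma.ext hH1 (heq_of_eq hG2)
      calc (S.filter (fun x => g x = v)).card
          ≤ (Finset.univ : Finset (Fin (2 * ℓ - m) → ZMod p)).card := hcard
        _ = p ^ (2 * ℓ - m) := by
            rw [Finset.card_univ, Fintype.card_fun, ZMod.card, Fintype.card_fin]
  -- constant value on each fiber
  have hconst : ∀ v : Fin m → ZMod p, ∀ x ∈ S.filter (fun x => g x = v),
      (∏ j ∈ Finset.range m, f j (psiFrac p j x.2 x.1))
        = ∏ j : Fin m, f (j : ℕ) ((((v j).val : ℝ) / (p : ℝ) : ℝ) : AddCircle (1 : ℝ)) := by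
    intro v x hx
    obtain ⟨hxS, hgx⟩ := Finset.mem_filter.1 hx
    obtain ⟨hxm, hxd, hxG, hxC⟩ := hprop x hxS
    rw [← Fin.prod_univ_eq_prod_range (fun j => f j (psiFrac p j x.2 x.1)) m]
    apply Finset.prod_congr rfl
    intro j _
    have hj : ((X ^ (j : ℕ) * x.2) %ₘ x.1).coeff (ℓ - 1) = v j := congrFun hgx j
    unfold psiFrac
    rw [hxd, hj]
  -- assemble
  have hsum : ∀ v : Fin m → ZMod p,
      (∑ x ∈ S.filter (fun x => g x = v),
          ∏ j ∈ Finset.range m, f j (psiFrac p j x.2 x.1))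
        ≤ (p : ℝ) ^ (2 * ℓ - m) *
            ∏ j : Fin m, f (j : ℕ) ((((v j).val : ℝ) / (p : ℝ) : ℝ) : AddCircle (1 : ℝ)) := by
    intro v
    rw [Finset.sum_congr rfl (hconst v), Finset.sum_const, nsmul_eq_mul]
    apply mul_le_mul_of_nonneg_right
    · calc ((S.filter (fun x => g x = v)).card : ℝ)
          ≤ ((p ^ (2 * ℓ - m) : ℕ) : ℝ) := Nat.cast_le.2 (hcount v)
        _ = (p : ℝ) ^ (2 * ℓ - m) := by push_cast; ring
    · exact Finset.prod_nonneg fun j _ => hf _ _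
  calc (∑ v : Fin m → ZMod p, ∑ x ∈ S.filter (fun x => g x = v),
        ∏ j ∈ Finset.range m, f j (psiFrac p j x.2 x.1))
      ≤ ∑ v : Fin m → ZMod p, (p : ℝ) ^ (2 * ℓ - m) *
          ∏ j : Fin m, f (j : ℕ) ((((v j).val : ℝ) / (p : ℝ) : ℝ) : AddCircle (1 : ℝ)) :=
        Finset.sum_le_sum fun v _ => hsum v
    _ = (p : ℝ) ^ (2 * ℓ - m) * ∑ v : Fin m → ZMod p,
          ∏ j : Fin m, f (j : ℕ) ((((v j).val : ℝ) / (p : ℝ) : ℝ) : AddCircle (1 : ℝ)) := by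
        rw [Finset.mul_sum]
    _ = (p : ℝ) ^ (2 * ℓ - m) * ∏ j : Fin m, ∑ ξ : ZMod p,
          f (j : ℕ) (((ξ.val : ℝ) / (p : ℝ) : ℝ) : AddCircle (1 : ℝ)) := by
        congr 1
        have := Finset.prod_univ_sum (fun _ : Fin m => (Finset.univ : Finset (ZMod p)))
          (fun j ξ => f (j : ℕ) (((ξ.val : ℝ) / (p : ℝ) : ℝ) : AddCircle (1 : ℝ)))
        rw [Fintype.piFinset_univ] at this
        exact this.symm
    _ = (p : ℝ) ^ (2 * ℓ - m) *
          ∏ j ∈ Finset.range m, ∑ ξ : ZMod p, f j (((ξ.val : ℝ) / (p : ℝ) : ℝ)) := by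
        rw [Fin.prod_univ_eq_prod_range
          (fun j => ∑ ξ : ZMod p, f j (((ξ.val : ℝ) / (p : ℝ) : ℝ) : AddCircle (1 : ℝ))) m]
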